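/- For complex q with |q| < 1, the sum over k ≥ 0 of (-q;q^2)_k q^(k(k+1)) / (q^2;q^2)_k equals 1 / ((q^2;q^8)_∞ (q^3;q^8)_∞ (q^7;q^8)_∞). (Göllnitz's identity.) -/

import Mathlib

open scoped BigOperators

/-- Finite q-Pochhammer symbol `(a;q)_n` for natural `n`. -/
noncomputable def qPochN (a q : ℂ) (n : ℕ) : ℂ :=
  ∏ j ∈ Finset.range n, (1 - a * q ^ j)

/-- Bilateral q-Pochhammer symbol `(a;q)_k` for integer `k`:
`∏_{j=1}^{k}(1 - a q^{j-1})` for `k ≥ 0` and `∏_{j=1}^{-k}(1 - a q^{-j})⁻¹` for `k < 0`. -/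
noncomputable def qPochZ (a q : ℂ) (k : ℤ) : ℂ :=
  if 0 ≤ k then ∏ j ∈ Finset.range k.toNat, (1 - a * q ^ j)
  else (∏ j ∈ Finset.range (-k).toNat, (1 - a * q ^ (-(j + 1 : ℕ) : ℤ)))⁻¹

/-- Infinite q-Pochhammer symbol `(a;q)_∞ = ∏_{j≥0}(1 - a q^j)`. -/
noncomputable def qPochInf (a q : ℂ) : ℂ :=
  ∏' j : ℕ, (1 - a * q ^ j)

open Finset Filter Complex Topology


/-- key: tail of the product has a nonzero `HasProd`. -/
lemma gk_key (a Q : ℂ) (hQ : ‖Q‖ < 1) :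
    ∃ N : ℕ, ∃ t : ℂ, t ≠ 0 ∧ HasProd (fun n : ℕ => 1 + a * Q ^ (n + N)) t := by
  have h0 : Tendsto (fun n : ℕ => ‖a * Q ^ n‖) atTop (𝓝 0) := by
    simp only [norm_mul, norm_pow]
    simpa using (tendsto_pow_atTop_nhds_zero_of_lt_one (norm_nonneg Q) hQ).const_mul ‖a‖
  obtain ⟨N, hN⟩ := eventually_atTop.mp (h0.eventually_le_const (by norm_num : (0:ℝ) < 1/2))
  have hnz : ∀ n : ℕ, (1 : ℂ) + a * Q ^ (n + N) ≠ 0 := by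
    intro n h
    have h1 : a * Q ^ (n + N) = -1 := by linear_combination h
    have := hN (n + N) (Nat.le_add_left _ _)
    rw [h1] at this
    norm_num at this
  have hlog : Summable (fun n : ℕ => Complex.log (1 + a * Q ^ (n + N))) := by
    apply Summable.of_norm_bounded (g := fun n => (3/2 * ‖a * Q ^ N‖) * ‖Q‖ ^ n)
    · exact ((summable_geometric_of_lt_one (norm_nonneg Q) hQ).mul_left _)
    · intro n
      have h2 : ‖a * Q ^ (n + N)‖ ≤ 1/2 := hN (n + N) (Nat.le_add_left _ _)
      calc ‖Complex.log (1 + a * Q ^ (n + N))‖ ≤ 3/2 * ‖a * Q ^ (n + N)‖ :=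
            Complex.norm_log_one_add_half_le_self h2
        _ = 3/2 * ‖a * Q ^ N‖ * ‖Q‖ ^ n := by
            rw [norm_mul, norm_mul, norm_pow, norm_pow, pow_add]; ring
  have heq := Complex.cexp_tsum_eq_tprod (f := fun n => 1 + a * Q ^ (n + N))
    (fun n => hnz n) hlog
  have hmul := Complex.multipliable_of_summable_log (f := fun n : ℕ => 1 + a * Q ^ (n + N)) hlog
  refine ⟨N, ∏' n : ℕ, (1 + a * Q ^ (n + N)), ?_, hmul.hasProd⟩
  have := heq
  beta_reduce at this
  rw [← this]
  exact Complex.exp_ne_zero _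

lemma gk_mult (a Q : ℂ) (hQ : ‖Q‖ < 1) : Multipliable (fun n : ℕ => 1 + a * Q ^ n) := by
  obtain ⟨N, t, -, ht⟩ := gk_key a Q hQ
  exact (HasProd.prod_range_mul (f := fun n : ℕ => 1 + a * Q ^ n) (k := N) ht).multipliable

lemma gk_ne_zero (a Q : ℂ) (hQ : ‖Q‖ < 1) (h : ∀ n : ℕ, (1:ℂ) + a * Q ^ n ≠ 0) :
    (∏' n : ℕ, (1 + a * Q ^ n)) ≠ 0 := by
  obtain ⟨N, t, ht0, ht⟩ := gk_key a Q hQ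
  rw [(HasProd.prod_range_mul (f := fun n : ℕ => 1 + a * Q ^ n) (k := N) ht).tprod_eq]
  exact mul_ne_zero (prod_ne_zero_iff.mpr fun i _ => h i) ht0

lemma mult' (a Q : ℂ) (hQ : ‖Q‖ < 1) : Multipliable (fun n : ℕ => 1 - a * Q ^ n) :=
  (gk_mult (-a) Q hQ).congr (fun n => by ring)

lemma one_sub_ne (a Q : ℂ) (ha : ‖a‖ < 1) (hQ : ‖Q‖ ≤ 1) (j : ℕ) : (1:ℂ) - a * Q ^ j ≠ 0 := by
  intro h
  have h1 : a * Q ^ j = 1 := by linear_combination -h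
  have : ‖a * Q ^ j‖ < 1 := by
    rw [norm_mul, norm_pow]
    calc ‖a‖ * ‖Q‖ ^ j ≤ ‖a‖ * 1 := by
          exact mul_le_mul_of_nonneg_left (pow_le_one₀ (norm_nonneg Q) hQ) (norm_nonneg a)
      _ = ‖a‖ := mul_one _
      _ < 1 := ha
  rw [h1] at this; norm_num at this

lemma qPochN_ne_zero (a Q : ℂ) (ha : ‖a‖ < 1) (hQ : ‖Q‖ ≤ 1) (n : ℕ) : qPochN a Q n ≠ 0 :=
  prod_ne_zero_iff.mpr fun j _ => one_sub_ne a Q ha hQ j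

lemma qPochInf_ne_zero (a Q : ℂ) (ha : ‖a‖ < 1) (hQ : ‖Q‖ < 1) : qPochInf a Q ≠ 0 := by
  have : qPochInf a Q = ∏' n : ℕ, (1 + (-a) * Q ^ n) := tprod_congr (fun n => by ring)
  rw [this]
  exact gk_ne_zero (-a) Q hQ (fun n => by
    have := one_sub_ne a Q ha hQ.le n
    intro h; apply this; linear_combination h)

section
variable (Q : ℂ) (hQ : ‖Q‖ < 1)

lemma qPN_ne (hQ : ‖Q‖ < 1) (n : ℕ) : qPochN Q Q n ≠ 0 := by
  apply prod_ne_zero_iff.mpr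
  intro j _
  intro h
  have h1 : Q * Q ^ j = 1 := by linear_combination -h
  have : ‖Q * Q ^ j‖ < 1 := by
    rw [norm_mul, norm_pow]
    calc ‖Q‖ * ‖Q‖ ^ j ≤ ‖Q‖ * 1 :=
          mul_le_mul_of_nonneg_left (pow_le_one₀ (norm_nonneg Q) hQ.le) (norm_nonneg Q)
      _ = ‖Q‖ := mul_one _
      _ < 1 := hQ
  rw [h1] at this; norm_num at this

lemma qPN_succ (n : ℕ) : qPochN Q Q (n + 1) = qPochN Q Q n * (1 - Q * Q ^ n) := by
  simp [qPochN, prod_range_succ]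

lemma pascal (hQ : ‖Q‖ < 1) (n k : ℕ) (hk : k < n) :
    qPochN Q Q (n + 1) / (qPochN Q Q (k + 1) * qPochN Q Q (n - k)) =
      Q ^ (k + 1) * (qPochN Q Q n / (qPochN Q Q (k + 1) * qPochN Q Q (n - (k + 1)))) +
      qPochN Q Q n / (qPochN Q Q k * qPochN Q Q (n - k)) := by
  obtain ⟨m, rfl⟩ : ∃ m, n = k + 1 + m := ⟨n - (k + 1), by omega⟩
  have h1 : k + 1 + m - k = m + 1 := by omega
  have h2 : k + 1 + m - (k + 1) = m := by omega
  rw [h1, h2]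
  have e1 : qPochN Q Q (k + 1 + m + 1) = qPochN Q Q (k + 1 + m) * (1 - Q * Q ^ (k + 1 + m)) :=
    qPN_succ Q _
  have e2 : qPochN Q Q (k + 1) = qPochN Q Q k * (1 - Q * Q ^ k) := qPN_succ Q _
  have e3 : qPochN Q Q (m + 1) = qPochN Q Q m * (1 - Q * Q ^ m) := qPN_succ Q _
  have hk1 : qPochN Q Q k ≠ 0 := qPN_ne Q hQ k
  have hm1 : qPochN Q Q m ≠ 0 := qPN_ne Q hQ m
  have hkm : qPochN Q Q (k + 1 + m) ≠ 0 := qPN_ne Q hQ _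
  have hc1 : (1 : ℂ) - Q * Q ^ k ≠ 0 := by
    have := qPN_ne Q hQ (k + 1); rw [e2] at this; exact right_ne_zero_of_mul this
  have hc3 : (1 : ℂ) - Q * Q ^ m ≠ 0 := by
    have := qPN_ne Q hQ (m + 1); rw [e3] at this; exact right_ne_zero_of_mul this
  rw [e1, e2, e3]
  field_simp
  ring

lemma gauss (hQ : ‖Q‖ < 1) : ∀ (n : ℕ) (z : ℂ),
    ∏ j ∈ Finset.range n, (1 + z * Q ^ j) =
      ∑ k ∈ Finset.range (n + 1), (∏ j ∈ Finset.range k, (z * Q ^ j)) *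
        (qPochN Q Q n / (qPochN Q Q k * qPochN Q Q (n - k))) := by
  intro n
  induction n with
  | zero => intro z; simp [qPochN]
  | succ n ih =>
    intro z
    have hT : ∀ k : ℕ, (∏ j ∈ range k, (Q * z * Q ^ j)) = Q ^ k * ∏ j ∈ range k, (z * Q ^ j) := by
      intro k
      calc (∏ j ∈ range k, (Q * z * Q ^ j)) = ∏ j ∈ range k, (Q * (z * Q ^ j)) :=
            prod_congr rfl (fun j _ => by ring)
        _ = Q ^ k * ∏ j ∈ range k, (z * Q ^ j) := by
            rw [prod_mul_distrib, prod_const, card_range]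
    have key : ∏ j ∈ range (n + 1), (1 + z * Q ^ j)
        = (1 + z) * ∏ j ∈ range n, (1 + Q * z * Q ^ j) := by
      rw [Finset.prod_range_succ']
      have : (∏ j ∈ range n, (1 + z * Q ^ (j + 1))) = ∏ j ∈ range n, (1 + Q * z * Q ^ j) :=
        prod_congr rfl (fun j _ => by ring)
      rw [this]; simp [mul_comm]
    rw [key, ih (Q * z)]
    -- abbreviations
    set T : ℕ → ℂ := fun k => ∏ j ∈ range k, (z * Q ^ j) with hTdef
    set B : ℕ → ℕ → ℂ := fun n k => qPochN Q Q n / (qPochN Q Q k * qPochN Q Q (n - k)) with hBdef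
    have hsum : (∑ k ∈ range (n + 1), (∏ j ∈ range k, (Q * z * Q ^ j)) * B n k)
        = ∑ k ∈ range (n + 1), Q ^ k * T k * B n k := by
      refine sum_congr rfl (fun k _ => ?_)
      rw [hT k]
    rw [hsum]
    have hB0 : ∀ m : ℕ, B m 0 = 1 := by
      intro m
      simp only [hBdef, Nat.sub_zero]
      rw [show qPochN Q Q 0 = 1 by simp [qPochN]]
      rw [one_mul, div_self (qPN_ne Q hQ m)]
    have hBtop : ∀ m : ℕ, B m m = 1 := by
      intro m
      simp only [hBdef, Nat.sub_self]
      rw [show qPochN Q Q 0 = 1 by simp [qPochN]]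
      rw [mul_one, div_self (qPN_ne Q hQ m)]
    have hTsucc : ∀ k : ℕ, T (k + 1) = T k * (z * Q ^ k) := fun k => prod_range_succ _ _
    -- expand LHS
    have expand : (1 + z) * (∑ k ∈ range (n + 1), Q ^ k * T k * B n k)
        = ∑ k ∈ range (n + 1), (Q ^ k * T k * B n k + T (k + 1) * B n k) := by
      rw [mul_sum]
      refine sum_congr rfl (fun k _ => ?_)
      rw [hTsucc k]; ring
    rw [expand, sum_add_distrib]
    -- peel sums
    rw [Finset.sum_range_succ' (fun k => Q ^ k * T k * B n k) n]
    rw [Finset.sum_range_succ (fun k => T (k + 1) * B n k) n]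
    rw [Finset.sum_range_succ' (fun k => T k * B (n + 1) k) (n + 1)]
    rw [Finset.sum_range_succ (fun k => T (k + 1) * B (n + 1) (k + 1)) n]
    have hpas : ∀ k ∈ range n, T (k + 1) * B (n + 1) (k + 1)
        = Q ^ (k + 1) * T (k + 1) * B n (k + 1) + T (k + 1) * B n k := by
      intro k hk
      have hkn : k < n := mem_range.mp hk
      have : B (n + 1) (k + 1) = Q ^ (k + 1) * B n (k + 1) + B n k := by
        simp only [hBdef]
        rw [show n + 1 - (k + 1) = n - k by omega]
        exact pascal Q hQ n k hkn
      rw [this]; ring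
    rw [sum_congr rfl hpas, sum_add_distrib]
    simp only [hB0, hBtop, pow_zero, one_mul, mul_one]
    have hT0 : T 0 = 1 := by simp [hTdef]
    rw [hT0]
    ring

lemma exists_lb (Q : ℂ) (hQ : ‖Q‖ < 1) : ∃ δ : ℝ, 0 < δ ∧ ∀ n, δ ≤ ‖qPochN Q Q n‖ := by
  have hmul : Multipliable (fun j : ℕ => 1 - Q * Q ^ j) := mult' Q Q hQ
  have hL : Tendsto (fun n => qPochN Q Q n) atTop (𝓝 (∏' j : ℕ, (1 - Q * Q ^ j))) :=
    hmul.hasProd.tendsto_prod_nat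
  have hL0 : (∏' j : ℕ, (1 - Q * Q ^ j)) ≠ 0 := by
    have h1 : (∏' j : ℕ, (1 - Q * Q ^ j)) = ∏' j : ℕ, (1 + (-Q) * Q ^ j) :=
      tprod_congr (fun j => by ring)
    rw [h1]
    refine gk_ne_zero (-Q) Q hQ (fun n => ?_)
    intro h
    have h2 : (1 : ℂ) - Q * Q ^ n = 0 := by linear_combination h
    exact (by simpa [qPochN] using qPN_ne Q hQ (n + 1) : qPochN Q Q (n + 1) ≠ 0)
      (by rw [qPN_succ, h2, mul_zero])
  have hnorm : Tendsto (fun n => ‖qPochN Q Q n‖) atTop (𝓝 ‖∏' j : ℕ, (1 - Q * Q ^ j)‖) :=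
    hL.norm
  have hpos : 0 < ‖∏' j : ℕ, (1 - Q * Q ^ j)‖ := norm_pos_iff.mpr hL0
  obtain ⟨N, hN⟩ := eventually_atTop.mp
    (hnorm.eventually (eventually_gt_nhds (by linarith : ‖∏' j : ℕ, (1 - Q * Q ^ j)‖ / 2
      < ‖∏' j : ℕ, (1 - Q * Q ^ j)‖)))
  set c := ‖∏' j : ℕ, (1 - Q * Q ^ j)‖ / 2 with hc
  have hne : (Finset.range (N + 1)).Nonempty := nonempty_range_add_one
  refine ⟨min c ((Finset.range (N + 1)).inf' hne (fun n => ‖qPochN Q Q n‖)), ?_, ?_⟩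
  · apply lt_min (by positivity)
    rw [Finset.lt_inf'_iff]
    exact fun i _ => norm_pos_iff.mpr (qPN_ne Q hQ i)
  · intro n
    rcases le_or_gt n N with h | h
    · exact le_trans (min_le_right _ _)
        (Finset.inf'_le _ (mem_range.mpr (by omega)))
    · exact le_trans (min_le_left _ _) (hN n (by omega)).le

lemma pow_prod_A (x : ℂ) (k : ℕ) : ∏ j ∈ range k, (x * (x ^ 2) ^ j) = x ^ (k * k) := by
  induction k with
  | zero => simp
  | succ k ih =>
    rw [prod_range_succ, ih, show (k + 1) * (k + 1) = k * k + (2 * k + 1) by ring, pow_add]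
    rw [pow_add, pow_mul]
    ring

lemma pow_prod_B (x : ℂ) (c m : ℕ) :
    ∏ j ∈ range m, (x ^ (2 * c + 2) * (x ^ 2) ^ j) = x ^ (m * m + m + 2 * c * m) := by
  induction m with
  | zero => simp
  | succ m ih =>
    rw [prod_range_succ, ih,
      show (m+1)*(m+1) + (m+1) + 2*c*(m+1) = (m*m + m + 2*c*m) + ((2*c+2) + 2*m) by ring,
      pow_add, pow_add, pow_mul]
    ring

lemma pow_prod_C (x : ℂ) (k : ℕ) :
    ∏ j ∈ range k, (x ^ 3 * (x ^ 4) ^ j) = x ^ (2 * k * k + k) := by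
  induction k with
  | zero => simp
  | succ k ih =>
    rw [prod_range_succ, ih,
      show 2*(k+1)*(k+1) + (k+1) = (2*k*k + k) + (3 + 4*k) by ring,
      pow_add, pow_add, pow_mul]
    ring

lemma euler (Q : ℂ) (hQ : ‖Q‖ < 1) (z : ℂ) :
    HasSum (fun k : ℕ => (∏ j ∈ Finset.range k, (z * Q ^ j)) / qPochN Q Q k)
      (∏' j : ℕ, (1 + z * Q ^ j)) := by
  obtain ⟨δ, hδ0, hδ⟩ := exists_lb Q hQ
  set T : ℕ → ℂ := fun k => ∏ j ∈ range k, (z * Q ^ j) with hTdef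
  set g : ℕ → ℂ := fun k => T k / qPochN Q Q k with hgdef
  set bound : ℕ → ℝ := fun k => (∏ j ∈ range k, (‖z‖ * ‖Q‖ ^ j)) * 2 ^ k * δ⁻¹ with hbdef
  have hbnonneg : ∀ k, 0 ≤ bound k := by
    intro k
    have : 0 ≤ ∏ j ∈ range k, (‖z‖ * ‖Q‖ ^ j) :=
      prod_nonneg (fun j _ => by positivity)
    positivity
  have hTnorm : ∀ k, ‖T k‖ = ∏ j ∈ range k, (‖z‖ * ‖Q‖ ^ j) := by
    intro k
    rw [hTdef, norm_prod]
    exact prod_congr rfl (fun j _ => by rw [norm_mul, norm_pow])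
  have hbound_sum : Summable bound := by
    apply summable_of_ratio_norm_eventually_le (r := 1/2) (by norm_num)
    have h0 : Tendsto (fun k : ℕ => ‖z‖ * ‖Q‖ ^ k * 2) atTop (𝓝 0) := by
      simpa using (((tendsto_pow_atTop_nhds_zero_of_lt_one (norm_nonneg Q)
        hQ).const_mul ‖z‖).mul_const 2)
    filter_upwards [h0.eventually_le_const (by norm_num : (0:ℝ) < 1/2)] with k hk
    have hstep : bound (k + 1) = bound k * (‖z‖ * ‖Q‖ ^ k * 2) := by
      simp only [hbdef, prod_range_succ, pow_succ]
      ring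
    rw [Real.norm_of_nonneg (hbnonneg _), Real.norm_of_nonneg (hbnonneg _), hstep]
    calc bound k * (‖z‖ * ‖Q‖ ^ k * 2) ≤ bound k * (1/2) :=
          mul_le_mul_of_nonneg_left hk (hbnonneg k)
      _ = 1/2 * bound k := by ring
  have hP := qPN_ne Q hQ
  -- the approximating functions
  set f : ℕ → ℕ → ℂ := fun n k =>
    if k ≤ n then T k * (qPochN Q Q n / (qPochN Q Q k * qPochN Q Q (n - k))) else 0 with hfdef
  have hratio : ∀ (m k : ℕ), ‖qPochN Q Q (m + k) / qPochN Q Q m‖ ≤ 2 ^ k := by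
    intro m k
    have hsplit : qPochN Q Q (m + k) = qPochN Q Q m * ∏ j ∈ range k, (1 - Q * Q ^ (m + j)) := by
      simp only [qPochN]
      exact Finset.prod_range_add _ m k
    rw [hsplit, mul_comm, mul_div_assoc, div_self (hP m), mul_one, norm_prod]
    calc ∏ j ∈ range k, ‖1 - Q * Q ^ (m + j)‖ ≤ ∏ j ∈ range k, 2 := by
          apply prod_le_prod (fun j _ => norm_nonneg _) (fun j _ => ?_)
          calc ‖(1:ℂ) - Q * Q ^ (m + j)‖ ≤ ‖(1:ℂ)‖ + ‖Q * Q ^ (m + j)‖ := norm_sub_le _ _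
            _ ≤ 1 + 1 := by
                refine add_le_add norm_one.le ?_
                rw [norm_mul, norm_pow]
                calc ‖Q‖ * ‖Q‖ ^ (m + j) ≤ 1 * 1 :=
                      mul_le_mul hQ.le (pow_le_one₀ (norm_nonneg Q) hQ.le)
                        (by positivity) zero_le_one
                  _ = 1 := one_mul 1
            _ = 2 := by norm_num
      _ = 2 ^ k := by rw [prod_const, card_range]
  have hf_bound : ∀ n k, ‖f n k‖ ≤ bound k := by
    intro n k
    by_cases hk : k ≤ n
    · obtain ⟨m, rfl⟩ : ∃ m, n = m + k := ⟨n - k, by omega⟩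
      have hmk : m + k - k = m := by omega
      rw [hfdef]
      simp only [if_pos hk, hmk]
      have heq : T k * (qPochN Q Q (m + k) / (qPochN Q Q k * qPochN Q Q m))
          = T k * (qPochN Q Q (m + k) / qPochN Q Q m) / qPochN Q Q k := by
        field_simp
      rw [heq, norm_div, norm_mul, hTnorm]
      rw [hbdef]
      have h1 : ‖z‖ ^ 0 = 1 := rfl
      have hPk : δ ≤ ‖qPochN Q Q k‖ := hδ k
      have hPkpos : (0:ℝ) < ‖qPochN Q Q k‖ := lt_of_lt_of_le hδ0 hPk
      rw [div_le_iff₀ hPkpos]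
      have step1 : (∏ j ∈ range k, (‖z‖ * ‖Q‖ ^ j)) * ‖qPochN Q Q (m + k) / qPochN Q Q m‖
          ≤ (∏ j ∈ range k, (‖z‖ * ‖Q‖ ^ j)) * 2 ^ k :=
        mul_le_mul_of_nonneg_left (hratio m k) (prod_nonneg (fun j _ => by positivity))
      calc (∏ j ∈ range k, (‖z‖ * ‖Q‖ ^ j)) * ‖qPochN Q Q (m + k) / qPochN Q Q m‖
          ≤ (∏ j ∈ range k, (‖z‖ * ‖Q‖ ^ j)) * 2 ^ k := step1
        _ = (∏ j ∈ range k, (‖z‖ * ‖Q‖ ^ j)) * 2 ^ k * δ⁻¹ * δ := by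
            field_simp
        _ ≤ (∏ j ∈ range k, (‖z‖ * ‖Q‖ ^ j)) * 2 ^ k * δ⁻¹ * ‖qPochN Q Q k‖ := by
            apply mul_le_mul_of_nonneg_left hPk
            have : 0 ≤ ∏ j ∈ range k, (‖z‖ * ‖Q‖ ^ j) :=
              prod_nonneg (fun j _ => by positivity)
            positivity
    · rw [hfdef]; simp only [if_neg hk, norm_zero]; exact hbnonneg k
  -- multipliability and limit of qPochN Q Q n
  have hmulQ : Multipliable (fun j : ℕ => 1 - Q * Q ^ j) := mult' Q Q hQ
  set L : ℂ := ∏' j : ℕ, (1 - Q * Q ^ j) with hLdef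
  have hL : Tendsto (fun n => qPochN Q Q n) atTop (𝓝 L) := hmulQ.hasProd.tendsto_prod_nat
  have hL0 : L ≠ 0 := by
    rw [hLdef]
    have h1 : (∏' j : ℕ, (1 - Q * Q ^ j)) = ∏' j : ℕ, (1 + (-Q) * Q ^ j) :=
      tprod_congr (fun j => by ring)
    rw [h1]
    refine gk_ne_zero (-Q) Q hQ (fun n => ?_)
    intro h
    have h2 : (1 : ℂ) - Q * Q ^ n = 0 := by linear_combination h
    exact (hP (n + 1)) (by rw [qPN_succ, h2, mul_zero])
  have hf_lim : ∀ k, Tendsto (fun n => f n k) atTop (𝓝 (g k)) := by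
    intro k
    have h1 : Tendsto (fun n => T k * (qPochN Q Q n / (qPochN Q Q k * qPochN Q Q (n - k))))
        atTop (𝓝 (T k * (L / (qPochN Q Q k * L)))) := by
      apply Tendsto.const_mul
      apply Tendsto.div hL
      · exact Tendsto.const_mul _ (hL.comp (tendsto_sub_atTop_nat k))
      · exact mul_ne_zero (hP k) hL0
    have h2 : T k * (L / (qPochN Q Q k * L)) = g k := by
      rw [hgdef]
      simp only
      rw [mul_comm (qPochN Q Q k) L, div_mul_eq_div_div, div_self hL0, mul_one_div]
    rw [h2] at h1
    apply h1.congr'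
    filter_upwards [eventually_ge_atTop k] with n hn
    rw [hfdef]
    simp only [if_pos hn]
  have hg_sum : Summable g := by
    apply Summable.of_norm_bounded (g := bound) hbound_sum
    intro k
    rw [hgdef]
    simp only
    rw [norm_div, hTnorm, hbdef]
    have hPk : δ ≤ ‖qPochN Q Q k‖ := hδ k
    have hPkpos : (0:ℝ) < ‖qPochN Q Q k‖ := lt_of_lt_of_le hδ0 hPk
    rw [div_le_iff₀ hPkpos]
    have hpn : 0 ≤ ∏ j ∈ range k, (‖z‖ * ‖Q‖ ^ j) := prod_nonneg (fun j _ => by positivity)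
    calc (∏ j ∈ range k, (‖z‖ * ‖Q‖ ^ j))
        = (∏ j ∈ range k, (‖z‖ * ‖Q‖ ^ j)) * 1 := (mul_one _).symm
      _ ≤ (∏ j ∈ range k, (‖z‖ * ‖Q‖ ^ j)) * 2 ^ k := by
          apply mul_le_mul_of_nonneg_left _ hpn
          exact one_le_pow₀ (by norm_num)
      _ = (∏ j ∈ range k, (‖z‖ * ‖Q‖ ^ j)) * 2 ^ k * δ⁻¹ * δ := by field_simp
      _ ≤ (∏ j ∈ range k, (‖z‖ * ‖Q‖ ^ j)) * 2 ^ k * δ⁻¹ * ‖qPochN Q Q k‖ := by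
          apply mul_le_mul_of_nonneg_left hPk
          positivity
  -- tsum of f n equals the partial product
  have hsum_f : ∀ n, ∑' k, f n k = ∏ j ∈ range n, (1 + z * Q ^ j) := by
    intro n
    have h1 : ∑' k, f n k = ∑ k ∈ range (n + 1), f n k := by
      apply tsum_eq_sum
      intro k hk
      have hkn : ¬ (k ≤ n) := fun h => hk (mem_range.mpr (Nat.lt_succ_of_le h))
      rw [hfdef]
      exact if_neg hkn
    rw [h1, gauss Q hQ n z]
    refine sum_congr rfl (fun k hk => ?_)
    have hkn : k ≤ n := Nat.lt_succ_iff.mp (mem_range.mp hk)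
    simp only [hfdef, if_pos hkn]
    rfl
  have ht1 : Tendsto (fun n => ∑' k, f n k) atTop (𝓝 (∑' k, g k)) :=
    tendsto_tsum_of_dominated_convergence hbound_sum hf_lim
      (Eventually.of_forall (fun n => hf_bound n))
  have ht2 : Tendsto (fun n => ∏ j ∈ range n, (1 + z * Q ^ j)) atTop
      (𝓝 (∏' j : ℕ, (1 + z * Q ^ j))) :=
    (gk_mult z Q hQ).hasProd.tendsto_prod_nat
  have heq : ∑' k, g k = ∏' j : ℕ, (1 + z * Q ^ j) := by
    apply tendsto_nhds_unique (ht1.congr (fun n => hsum_f n)) ht2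
  rw [← heq]
  exact hg_sum.hasSum

lemma norm_sq_lt (Q : ℂ) (hQ : ‖Q‖ < 1) : ‖Q ^ 2‖ < 1 := by
  rw [norm_pow]
  exact pow_lt_one₀ (norm_nonneg Q) hQ two_ne_zero

lemma pair_inf (a Q : ℂ) (hQ : ‖Q‖ < 1) :
    qPochInf a Q * qPochInf (-a) Q = qPochInf (a ^ 2) (Q ^ 2) := by
  have h1 : qPochInf (-a) Q = ∏' j : ℕ, (1 + a * Q ^ j) := tprod_congr fun j => by ring
  rw [h1]
  unfold qPochInf
  rw [← Multipliable.tprod_mul (mult' a Q hQ) (gk_mult a Q hQ)]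
  exact tprod_congr fun j => by ring

lemma split_inf (a Q : ℂ) (hQ : ‖Q‖ < 1) :
    qPochInf a Q = qPochInf a (Q ^ 2) * qPochInf (a * Q) (Q ^ 2) := by
  have hQ2 : ‖Q ^ 2‖ < 1 := norm_sq_lt Q hQ
  have he : Multipliable (fun k : ℕ => 1 - a * Q ^ (2 * k)) :=
    (mult' a (Q ^ 2) hQ2).congr (fun k => by rw [← pow_mul])
  have ho : Multipliable (fun k : ℕ => 1 - a * Q ^ (2 * k + 1)) :=
    (mult' (a * Q) (Q ^ 2) hQ2).congr (fun k => by ring)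
  have h := tprod_even_mul_odd (f := fun j : ℕ => 1 - a * Q ^ j) he ho
  unfold qPochInf
  rw [← h]
  congr 1
  · exact tprod_congr fun k => by simp only [← pow_mul]
  · exact tprod_congr fun k => by ring

set_option maxHeartbeats 1000000 in
theorem gollnitz_identity (q : ℂ) (hq : ‖q‖ < 1) :
    ∑' k : ℕ, qPochN (-q) (q ^ 2) k * q ^ (k * (k + 1)) / qPochN (q ^ 2) (q ^ 2) k =
      1 / (qPochInf (q ^ 2) (q ^ 8) * qPochInf (q ^ 3) (q ^ 8) * qPochInf (q ^ 7) (q ^ 8)) := by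
  have hqp : ∀ i : ℕ, 1 ≤ i → ‖q ^ i‖ < 1 := by
    intro i hi
    rw [norm_pow]
    calc ‖q‖ ^ i ≤ ‖q‖ ^ 1 := pow_le_pow_of_le_one (norm_nonneg q) hq.le hi
      _ = ‖q‖ := pow_one _
      _ < 1 := hq
  have hq2 : ‖q ^ 2‖ < 1 := hqp 2 (by norm_num)
  have hq4 : ‖q ^ 4‖ < 1 := hqp 4 (by norm_num)
  have hq8 : ‖q ^ 8‖ < 1 := hqp 8 (by norm_num)
  have hP2 : ∀ n, qPochN (q ^ 2) (q ^ 2) n ≠ 0 := qPN_ne (q ^ 2) hq2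
  obtain ⟨δ, hδ0, hδ⟩ := exists_lb (q ^ 2) hq2
  set G : ℕ × ℕ → ℂ := fun p =>
    q ^ ((p.1 + p.2) * (p.1 + p.2 + 1) + p.1 * p.1) /
      (qPochN (q ^ 2) (q ^ 2) p.1 * qPochN (q ^ 2) (q ^ 2) p.2) with hGdef
  set F : ℕ × ℕ → ℂ := fun p =>
    if p.2 ≤ p.1 then q ^ (p.1 * (p.1 + 1) + p.2 * p.2) /
      (qPochN (q ^ 2) (q ^ 2) p.2 * qPochN (q ^ 2) (q ^ 2) (p.1 - p.2)) else 0 with hFdef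
  -- Summability of G
  have hgeo : Summable (fun n : ℕ => ‖(‖q‖ ^ n : ℝ)‖) :=
    (summable_geometric_of_lt_one (norm_nonneg q) hq).congr
      (fun n => (Real.norm_of_nonneg (by positivity)).symm)
  have hGsum : Summable G := by
    apply Summable.of_norm_bounded (g := fun p : ℕ × ℕ => ‖q‖ ^ p.1 * ‖q‖ ^ p.2 * (δ⁻¹ * δ⁻¹))
    · exact (summable_mul_of_summable_norm hgeo hgeo).mul_right _
    · rintro ⟨k, m⟩
      simp only [hGdef]
      rw [norm_div, norm_mul, norm_pow]
      have hE : k + m ≤ (k + m) * (k + m + 1) + k * k := by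
        calc k + m ≤ (k + m) * (k + m + 1) := Nat.le_mul_of_pos_right _ (by omega)
          _ ≤ (k + m) * (k + m + 1) + k * k := Nat.le_add_right _ _
      have h1 : ‖q‖ ^ ((k + m) * (k + m + 1) + k * k) ≤ ‖q‖ ^ (k + m) :=
        pow_le_pow_of_le_one (norm_nonneg q) hq.le hE
      have h2 : δ * δ ≤ ‖qPochN (q ^ 2) (q ^ 2) k‖ * ‖qPochN (q ^ 2) (q ^ 2) m‖ :=
        mul_le_mul (hδ k) (hδ m) hδ0.le (norm_nonneg _)
      calc ‖q‖ ^ ((k + m) * (k + m + 1) + k * k) /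
            (‖qPochN (q ^ 2) (q ^ 2) k‖ * ‖qPochN (q ^ 2) (q ^ 2) m‖)
          ≤ ‖q‖ ^ (k + m) / (δ * δ) :=
            div_le_div₀ (by positivity) h1 (by positivity) h2
        _ = ‖q‖ ^ k * ‖q‖ ^ m * (δ⁻¹ * δ⁻¹) := by rw [pow_add]; ring
  -- the triangle reindexing
  set φ : ℕ × ℕ → ℕ × ℕ := fun p => (p.1 + p.2, p.1) with hφdef
  have hφinj : Function.Injective φ := by
    rintro ⟨a, b⟩ ⟨c, d⟩ h
    simp only [hφdef, Prod.mk.injEq] at h ⊢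
    omega
  have hcomp : ∀ p, F (φ p) = G p := by
    rintro ⟨k, m⟩
    simp only [hφdef, hFdef, hGdef, if_pos (Nat.le_add_right k m)]
    rw [Nat.add_sub_cancel_left]
  have hsupp : ∀ x ∉ Set.range φ, F x = 0 := by
    rintro ⟨n, k⟩ hx
    by_cases h : k ≤ n
    · exfalso
      refine hx ⟨(k, n - k), ?_⟩
      simp only [hφdef]
      rw [Nat.add_sub_cancel' h]
    · simp only [hFdef]
      exact if_neg h
  have hFsum : Summable F := by
    have h1 : F ∘ φ = G := funext hcomp
    exact (hφinj.summable_iff hsupp).mp (h1 ▸ hGsum)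
  have htsumFG : ∑' p : ℕ × ℕ, F p = ∑' p : ℕ × ℕ, G p := by
    have h1 := hφinj.tsum_eq (f := F)
      (by intro x hx; by_contra hr; exact hx (hsupp x hr))
    rw [← h1]
    exact tsum_congr hcomp
  -- per-n identity
  have han : ∀ n, qPochN (-q) (q ^ 2) n * q ^ (n * (n + 1)) / qPochN (q ^ 2) (q ^ 2) n
      = ∑ k ∈ range (n + 1), F (n, k) := by
    intro n
    have h1 : qPochN (-q) (q ^ 2) n = ∏ j ∈ range n, (1 + q * (q ^ 2) ^ j) := by
      unfold qPochN
      exact prod_congr rfl (fun j _ => by ring)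
    rw [h1, gauss (q ^ 2) hq2 n q, Finset.sum_mul, Finset.sum_div]
    refine sum_congr rfl (fun k hk => ?_)
    have hkn : k ≤ n := Nat.lt_succ_iff.mp (mem_range.mp hk)
    rw [pow_prod_A q k]
    simp only [hFdef, if_pos hkn]
    rw [pow_add]
    field_simp [hP2 n, hP2 k, hP2 (n - k)]
  have hslice : ∀ n, Summable (fun k => F (n, k)) := by
    intro n
    apply summable_of_ne_finset_zero (s := range (n + 1))
    intro k hk
    simp only [hFdef]
    exact if_neg (fun h => hk (mem_range.mpr (Nat.lt_succ_of_le h)))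
  have hLHS : (∑' n : ℕ, qPochN (-q) (q ^ 2) n * q ^ (n * (n + 1)) / qPochN (q ^ 2) (q ^ 2) n)
      = ∑' p : ℕ × ℕ, F p := by
    rw [Summable.tsum_prod' hFsum hslice]
    refine tsum_congr (fun n => ?_)
    rw [han n]
    exact (tsum_eq_sum (fun k hk => by
      simp only [hFdef]
      exact if_neg (fun h => hk (mem_range.mpr (Nat.lt_succ_of_le h))))).symm
  -- inner Euler evaluation
  have hPM : ∀ k, qPochN (-(q ^ 2)) (q ^ 2) k ≠ 0 := by
    intro k
    apply qPochN_ne_zero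
    · rw [norm_neg]; exact hq2
    · exact hq2.le
  have hsplit : ∀ k : ℕ, qPochInf (-(q ^ 2)) (q ^ 2)
      = qPochN (-(q ^ 2)) (q ^ 2) k * (∏' n : ℕ, (1 + q ^ (2 * k + 2) * (q ^ 2) ^ n)) := by
    intro k
    have hMtail : Multipliable (fun n : ℕ => 1 + q ^ (2 * k + 2) * (q ^ 2) ^ n) :=
      gk_mult (q ^ (2 * k + 2)) (q ^ 2) hq2
    have htail : HasProd (fun n : ℕ => 1 + q ^ 2 * (q ^ 2) ^ (n + k))
        (∏' n : ℕ, (1 + q ^ (2 * k + 2) * (q ^ 2) ^ n)) := by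
      have heq : (fun n : ℕ => 1 + q ^ 2 * (q ^ 2) ^ (n + k))
          = (fun n : ℕ => 1 + q ^ (2 * k + 2) * (q ^ 2) ^ n) := by
        funext n; ring
      rw [heq]
      exact hMtail.hasProd
    have hfull := HasProd.prod_range_mul (f := fun j : ℕ => 1 + q ^ 2 * (q ^ 2) ^ j)
      (k := k) htail
    have h1 : qPochInf (-(q ^ 2)) (q ^ 2) = ∏' j : ℕ, (1 + q ^ 2 * (q ^ 2) ^ j) :=
      tprod_congr (fun j => by ring)
    rw [h1, hfull.tprod_eq]
    congr 1
    unfold qPochN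
    exact prod_congr rfl (fun j _ => by ring)
  have hinner : ∀ k : ℕ, HasSum (fun m => G (k, m))
      ((q ^ (2 * k * k + k) / qPochN (q ^ 2) (q ^ 2) k) *
        (qPochInf (-(q ^ 2)) (q ^ 2) / qPochN (-(q ^ 2)) (q ^ 2) k)) := by
    intro k
    have hTk : (∏' n : ℕ, (1 + q ^ (2 * k + 2) * (q ^ 2) ^ n))
        = qPochInf (-(q ^ 2)) (q ^ 2) / qPochN (-(q ^ 2)) (q ^ 2) k := by
      rw [eq_div_iff (hPM k), mul_comm]
      exact (hsplit k).symm
    have heu := euler (q ^ 2) hq2 (q ^ (2 * k + 2))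
    have heq : (fun m : ℕ => (∏ j ∈ Finset.range m, (q ^ (2 * k + 2) * (q ^ 2) ^ j)) /
        qPochN (q ^ 2) (q ^ 2) m)
        = fun m : ℕ => q ^ (m * m + m + 2 * k * m) / qPochN (q ^ 2) (q ^ 2) m := by
      funext m; rw [pow_prod_B q k m]
    rw [heq, hTk] at heu
    have h2 := heu.mul_left (q ^ (2 * k * k + k) / qPochN (q ^ 2) (q ^ 2) k)
    have h3 : (fun m : ℕ => (q ^ (2 * k * k + k) / qPochN (q ^ 2) (q ^ 2) k) *
        (q ^ (m * m + m + 2 * k * m) / qPochN (q ^ 2) (q ^ 2) m)) = fun m => G (k, m) := by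
      funext m
      simp only [hGdef]
      rw [show (k + m) * (k + m + 1) + k * k = (2 * k * k + k) + (m * m + m + 2 * k * m) by ring,
        pow_add, div_mul_div_comm]
      ring
    exact h3 ▸ h2
  -- outer Euler evaluation
  have hP24 : ∀ k, qPochN (q ^ 2) (q ^ 2) k * qPochN (-(q ^ 2)) (q ^ 2) k
      = qPochN (q ^ 4) (q ^ 4) k := by
    intro k
    unfold qPochN
    rw [← prod_mul_distrib]
    exact prod_congr rfl (fun j _ => by ring)
  have houter := (euler (q ^ 4) hq4 (q ^ 3)).mul_left (qPochInf (-(q ^ 2)) (q ^ 2))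
  have hPinf3 : (∏' j : ℕ, (1 + q ^ 3 * (q ^ 4) ^ j)) = qPochInf (-(q ^ 3)) (q ^ 4) := by
    unfold qPochInf
    exact tprod_congr (fun j => by ring)
  rw [hPinf3] at houter
  have houter2 : HasSum (fun k : ℕ => (q ^ (2 * k * k + k) / qPochN (q ^ 2) (q ^ 2) k) *
      (qPochInf (-(q ^ 2)) (q ^ 2) / qPochN (-(q ^ 2)) (q ^ 2) k))
      (qPochInf (-(q ^ 2)) (q ^ 2) * qPochInf (-(q ^ 3)) (q ^ 4)) := by
    have h3 : (fun k : ℕ => qPochInf (-(q ^ 2)) (q ^ 2) *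
        ((∏ j ∈ Finset.range k, (q ^ 3 * (q ^ 4) ^ j)) / qPochN (q ^ 4) (q ^ 4) k))
        = fun k : ℕ => (q ^ (2 * k * k + k) / qPochN (q ^ 2) (q ^ 2) k) *
          (qPochInf (-(q ^ 2)) (q ^ 2) / qPochN (-(q ^ 2)) (q ^ 2) k) := by
      funext k
      rw [pow_prod_C q k, ← hP24 k]
      field_simp [hP2 k, hPM k]
    exact h3 ▸ houter
  have hGval : ∑' p : ℕ × ℕ, G p = qPochInf (-(q ^ 2)) (q ^ 2) * qPochInf (-(q ^ 3)) (q ^ 4) := by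
    rw [Summable.tsum_prod' hGsum hGsum.prod_factor]
    rw [tsum_congr (fun k => (hinner k).tsum_eq)]
    exact houter2.tsum_eq
  rw [hLHS, htsumFG, hGval]
  -- endgame: infinite product identities
  have hq3 : ‖q ^ 3‖ < 1 := hqp 3 (by norm_num)
  have hq6 : ‖q ^ 6‖ < 1 := hqp 6 (by norm_num)
  have hq7 : ‖q ^ 7‖ < 1 := hqp 7 (by norm_num)
  have hA : qPochInf (q ^ 2) (q ^ 8) ≠ 0 := qPochInf_ne_zero _ _ hq2 hq8
  have hB : qPochInf (q ^ 3) (q ^ 8) ≠ 0 := qPochInf_ne_zero _ _ hq3 hq8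
  have hC : qPochInf (q ^ 7) (q ^ 8) ≠ 0 := qPochInf_ne_zero _ _ hq7 hq8
  have hP44 : qPochInf (q ^ 4) (q ^ 4) ≠ 0 := qPochInf_ne_zero _ _ hq4 hq4
  have E1 : qPochInf (q ^ 2) (q ^ 2) * qPochInf (-(q ^ 2)) (q ^ 2) = qPochInf (q ^ 4) (q ^ 4) := by
    have h := pair_inf (q ^ 2) (q ^ 2) hq2
    rw [show ((q : ℂ) ^ 2) ^ 2 = q ^ 4 by ring] at h
    exact h
  have E2 : qPochInf (q ^ 3) (q ^ 4) * qPochInf (-(q ^ 3)) (q ^ 4) = qPochInf (q ^ 6) (q ^ 8) := by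
    have h := pair_inf (q ^ 3) (q ^ 4) hq4
    rw [show ((q : ℂ) ^ 3) ^ 2 = q ^ 6 by ring, show ((q : ℂ) ^ 4) ^ 2 = q ^ 8 by ring] at h
    exact h
  have E3 : qPochInf (q ^ 2) (q ^ 2) = qPochInf (q ^ 2) (q ^ 4) * qPochInf (q ^ 4) (q ^ 4) := by
    have h := split_inf (q ^ 2) (q ^ 2) hq2
    rw [show ((q : ℂ) ^ 2) ^ 2 = q ^ 4 by ring, show (q : ℂ) ^ 2 * q ^ 2 = q ^ 4 by ring] at h
    exact h
  have E4 : qPochInf (q ^ 2) (q ^ 4) = qPochInf (q ^ 2) (q ^ 8) * qPochInf (q ^ 6) (q ^ 8) := by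
    have h := split_inf (q ^ 2) (q ^ 4) hq4
    rw [show ((q : ℂ) ^ 4) ^ 2 = q ^ 8 by ring, show (q : ℂ) ^ 2 * q ^ 4 = q ^ 6 by ring] at h
    exact h
  have E5 : qPochInf (q ^ 3) (q ^ 4) = qPochInf (q ^ 3) (q ^ 8) * qPochInf (q ^ 7) (q ^ 8) := by
    have h := split_inf (q ^ 3) (q ^ 4) hq4
    rw [show ((q : ℂ) ^ 4) ^ 2 = q ^ 8 by ring, show (q : ℂ) ^ 3 * q ^ 4 = q ^ 7 by ring] at h
    exact h
  have h1 : qPochInf (q ^ 2) (q ^ 8) * qPochInf (q ^ 6) (q ^ 8) * qPochInf (-(q ^ 2)) (q ^ 2)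
      = 1 := by
    have e := E1
    rw [E3, E4] at e
    exact mul_right_cancel₀ hP44 (by linear_combination e)
  have h2 : qPochInf (q ^ 3) (q ^ 8) * qPochInf (q ^ 7) (q ^ 8) * qPochInf (-(q ^ 3)) (q ^ 4)
      = qPochInf (q ^ 6) (q ^ 8) := by
    have e := E2
    rw [E5] at e
    exact e
  rw [eq_div_iff (mul_ne_zero (mul_ne_zero hA hB) hC)]
  linear_combination (qPochInf (-(q ^ 2)) (q ^ 2) * qPochInf (q ^ 2) (q ^ 8)) * h2 + h1
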